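/- arXiv:2005.05260 — 5 statements merged into one kernel-verified Lean document; each statement's English description precedes it below -/
import Mathlib

section
/- Conversely, the fluctuation–dissipation relation is necessary for stationarity of the Gibbs density under the pairwise Fokker–Planck operator: if a, b are real numbers such that for every momentum vector p one has D_e[ a (e·v_ij) ρ ](p) + b (D_e² ρ)(p) = 0, then b = a/β. In particular, taking a = γ ω_D and b = (σ²/2) ω_R², stationarity of the Gibbs momentum density forces σ² ω_R² = 2 γ ω_D / β. -/
open scoped RealInnerProductSpace BigOperators

private lemma aux_exp_hasDerivAt (c s : ℝ) :
    HasDerivAt (fun t : ℝ => Real.exp (c * (s + t) ^ 2))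
      (2 * c * s * Real.exp (c * s ^ 2)) 0 := by
  have h0 : HasDerivAt (fun t : ℝ => s + t) 1 0 := by
    simpa using (hasDerivAt_id (0:ℝ)).const_add s
  have h2 : HasDerivAt (fun t : ℝ => c * (s + t) ^ 2) (c * (2 * s)) 0 := by
    have := (h0.pow 2).const_mul c
    simpa using this
  have h3 := (Real.hasDerivAt_exp (c * (s + 0) ^ 2)).comp 0 h2
  simp only [add_zero] at h3
  exact h3.congr_deriv (by ring)

private lemma aux_hasDerivAt (A c : ℝ) :
    HasDerivAt (fun t : ℝ => A * t * Real.exp (c * t ^ 2)) A 0 := by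
  have h1 : HasDerivAt (fun t : ℝ => A * t) A 0 := by
    simpa using (hasDerivAt_id (0:ℝ)).const_mul A
  have h3 : HasDerivAt (fun t : ℝ => Real.exp (c * t ^ 2))
      (2 * c * 0 * Real.exp (c * 0 ^ 2)) 0 := by
    simpa using aux_exp_hasDerivAt c 0
  have := h1.mul h3
  simpa [Pi.mul_def] using this

/-- the fluctuation–dissipation relation is necessary for stationarity of the
Gibbs momentum density under the pairwise Fokker–Planck operator: if
`D_e[a (e·v_ij) ρ] + b D_e² ρ = 0` pointwise, then `b = a/β`. -/
theorem dpd_pair_stationarity_forces_fluctuation_dissipation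
    {d N : ℕ} (hd : 1 ≤ d) (hN : 2 ≤ N)
    (m : Fin N → ℝ) (hm : ∀ k, 0 < m k)
    (β : ℝ) (hβ : 0 < β)
    (i j : Fin N) (hij : i ≠ j)
    (e : EuclideanSpace ℝ (Fin d)) (he : ‖e‖ = 1)
    (a b : ℝ)
    -- the Gibbs momentum density
    (ρ : (Fin N → EuclideanSpace ℝ (Fin d)) → ℝ)
    (hρ : ρ = fun p => Real.exp (-β * ∑ k, ‖p k‖ ^ 2 / (2 * m k)))
    -- the pair direction: `e` in the `i`-th slot, `-e` in the `j`-th slot, `0` elsewhere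
    (u : Fin N → EuclideanSpace ℝ (Fin d))
    (hu : u = Pi.single i e - Pi.single j e)
    -- the relative velocity of the pair
    (v : (Fin N → EuclideanSpace ℝ (Fin d)) → EuclideanSpace ℝ (Fin d))
    (hv : v = fun p => (m i)⁻¹ • p i - (m j)⁻¹ • p j)
    -- stationarity of the Gibbs momentum density
    (hstat : ∀ p : Fin N → EuclideanSpace ℝ (Fin d),
      lineDeriv ℝ (fun p' => a * ⟪e, v p'⟫ * ρ p') p u
        + b * lineDeriv ℝ (fun p' => lineDeriv ℝ ρ p' u) p u = 0) :
    b = a / β := by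
  set M : ℝ := (m i)⁻¹ + (m j)⁻¹ with hM
  have hmi := (hm i).ne'
  have hmj := (hm j).ne'
  have hMpos : 0 < M := add_pos (inv_pos.mpr (hm i)) (inv_pos.mpr (hm j))
  have hui : u i = e := by
    simp [hu, Pi.single_eq_same, Pi.single_eq_of_ne hij]
  have huj : u j = -e := by
    simp [hu, Pi.single_eq_same, Pi.single_eq_of_ne hij.symm]
  set c : ℝ := -(β * M / 2) with hc
  -- ρ along the line
  have hρline : ∀ s : ℝ, ρ (s • u) = Real.exp (c * s ^ 2) := by
    intro s
    simp only [hρ]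
    have hsum : ∑ k, ‖(s • u) k‖ ^ 2 / (2 * m k)
        = ∑ k : Fin N, ((if k = i then s ^ 2 / (2 * m i) else 0)
            + (if k = j then s ^ 2 / (2 * m j) else 0)) := by
      apply Finset.sum_congr rfl
      intro k _
      rcases eq_or_ne k i with rfl | hki
      · simp [hui, if_neg hij, norm_smul, he, mul_pow, sq_abs]
      · rcases eq_or_ne k j with rfl | hkj
        · simp [huj, if_neg hki, norm_smul, he, mul_pow, sq_abs]
        · have : u k = 0 := by
            simp [hu, Pi.single_eq_of_ne hki, Pi.single_eq_of_ne hkj]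
          simp [this, if_neg hki, if_neg hkj]
    rw [hsum, Finset.sum_add_distrib, Finset.sum_ite_eq' Finset.univ,
      Finset.sum_ite_eq' Finset.univ]
    simp only [Finset.mem_univ, if_true]
    congr 1
    rw [hc, hM]
    field_simp
  -- inner product along the line
  have hvline : ∀ s : ℝ, ⟪e, v (s • u)⟫ = M * s := by
    intro s
    rw [hv]
    simp only [Pi.smul_apply, hui, huj, smul_neg, inner_sub_right, inner_neg_right,
      real_inner_smul_right]
    rw [real_inner_self_eq_norm_sq, he]
    rw [hM]; ring
  -- inner line derivative of ρ along the line
  have hinner : ∀ s : ℝ, lineDeriv ℝ ρ (s • u) u = (2 * c) * s * Real.exp (c * s ^ 2) := by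
    intro s
    have hfun : (fun t : ℝ => ρ (s • u + t • u)) = fun t => Real.exp (c * (s + t) ^ 2) := by
      funext t
      rw [← add_smul, hρline]
    show deriv (fun t : ℝ => ρ (s • u + t • u)) 0 = _
    rw [hfun, (aux_exp_hasDerivAt c s).deriv]
  -- evaluate stationarity at p = 0
  have h0 := hstat 0
  have hterm1 : lineDeriv ℝ (fun p' => a * ⟪e, v p'⟫ * ρ p')
      (0 : Fin N → EuclideanSpace ℝ (Fin d)) u = a * M := by
    have hfun : (fun t : ℝ => a * ⟪e, v ((0 : Fin N → EuclideanSpace ℝ (Fin d)) + t • u)⟫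
        * ρ ((0 : Fin N → EuclideanSpace ℝ (Fin d)) + t • u))
        = fun t : ℝ => (a * M) * t * Real.exp (c * t ^ 2) := by
      funext t
      rw [zero_add, hvline, hρline]
      ring
    show deriv _ (0:ℝ) = _
    rw [hfun, (aux_hasDerivAt (a * M) c).deriv]
  have hterm2 : lineDeriv ℝ (fun p' => lineDeriv ℝ ρ p' u)
      (0 : Fin N → EuclideanSpace ℝ (Fin d)) u = 2 * c := by
    have hfun : (fun t : ℝ => lineDeriv ℝ ρ ((0 : Fin N → EuclideanSpace ℝ (Fin d)) + t • u) u)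
        = fun t : ℝ => (2 * c) * t * Real.exp (c * t ^ 2) := by
      funext t
      rw [zero_add, hinner]
    show deriv _ (0:ℝ) = _
    rw [hfun, (aux_hasDerivAt (2 * c) c).deriv]
  rw [hterm1, hterm2] at h0
  rw [hc] at h0
  have hzero : M * (a - b * β) = 0 := by linear_combination h0
  have h2 : a - b * β = 0 := by
    rcases mul_eq_zero.mp hzero with h | h
    · exact absurd h hMpos.ne'
    · exact h
  field_simp
  linarith
end

section
/- The canonical Gibbs density is a stationary solution of the DPD Fokker–Planck equation: if σ² = 2γ/β and ω_D(r) = ω_R(r)² for all r > 0, then at every phase point (q,p) with pairwise distinct positions, −Σ_i (p_i/m_i)·∇_{q_i} ρ_β(q,p) + Σ_i (∇_{q_i}U(q))·∇_{p_i} ρ_β(q,p) + Σ_{i<j} ( D_{ij}[ γ ω_D(r_ij) (e_ij·v_ij) ρ_β ](q,p) + (σ²/2) ω_R(r_ij)² (D_{ij}² ρ_β)(q,p) ) = 0. -/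
open scoped RealInnerProductSpace BigOperators

noncomputable section

/-- Unit separation vector `e_ij = (q_i − q_j)/|q_i − q_j|`. -/
def unitSep {d N : ℕ} (q : Fin N → EuclideanSpace ℝ (Fin d)) (i j : Fin N) :
    EuclideanSpace ℝ (Fin d) :=
  ‖q i - q j‖⁻¹ • (q i - q j)

/-- Pair direction in momentum space: `e_ij` in the `i`-th slot, `−e_ij` in the `j`-th slot,
`0` elsewhere. -/
def pairDir {d N : ℕ} (q : Fin N → EuclideanSpace ℝ (Fin d)) (i j : Fin N) :
    Fin N → EuclideanSpace ℝ (Fin d) :=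
  Pi.single i (unitSep q i j) - Pi.single j (unitSep q i j)

/-- Relative velocity `v_ij = p_i/m_i − p_j/m_j`. -/
def relVel {d N : ℕ} (m : Fin N → ℝ) (p : Fin N → EuclideanSpace ℝ (Fin d)) (i j : Fin N) :
    EuclideanSpace ℝ (Fin d) :=
  (m i)⁻¹ • p i - (m j)⁻¹ • p j

lemma sq_norm_hasDerivAt {d : ℕ} (a b : EuclideanSpace ℝ (Fin d)) :
    HasDerivAt (fun t : ℝ => ‖a + t • b‖ ^ 2) (2 * ⟪a, b⟫) 0 := by
  have hline : HasDerivAt (fun t : ℝ => a + t • b) b 0 := by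
    simpa using ((hasDerivAt_id (0:ℝ)).smul_const b).const_add a
  have h := hline.inner ℝ hline
  simp only [zero_smul, add_zero] at h
  have hfe : (fun t : ℝ => (inner ℝ (a + t • b) (a + t • b) : ℝ)) =
      fun t : ℝ => ‖a + t • b‖ ^ 2 := by
    funext t; exact real_inner_self_eq_norm_sq _
  rw [hfe] at h
  refine h.congr_deriv ?_
  rw [real_inner_comm]; ring

lemma gibbs_mom_hasLineDerivAt {d N : ℕ} (m : Fin N → ℝ) (hm : ∀ k, 0 < m k) (β c : ℝ)
    (p u : Fin N → EuclideanSpace ℝ (Fin d)) :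
    HasLineDerivAt ℝ
      (fun p' : Fin N → EuclideanSpace ℝ (Fin d) =>
        Real.exp (-β * ((∑ k, ‖p' k‖ ^ 2 / (2 * m k)) + c)))
      (-β * (∑ k, ⟪p k, u k⟫ / m k) *
        Real.exp (-β * ((∑ k, ‖p k‖ ^ 2 / (2 * m k)) + c))) p u := by
  show HasDerivAt
    (fun t : ℝ => Real.exp (-β * ((∑ k, ‖(p + t • u) k‖ ^ 2 / (2 * m k)) + c))) _ 0
  simp only [Pi.add_apply, Pi.smul_apply]
  have h1 : HasDerivAt (fun t : ℝ => ∑ k, ‖p k + t • u k‖ ^ 2 / (2 * m k))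
      (∑ k, ⟪p k, u k⟫ / m k) 0 := by
    apply HasDerivAt.fun_sum
    intro k _
    have h := (sq_norm_hasDerivAt (p k) (u k)).div_const (2 * m k)
    refine h.congr_deriv ?_
    rw [mul_div_mul_left _ _ (two_ne_zero)]
  have h2 := ((h1.add_const c).const_mul (-β)).exp
  convert h2 using 1
  simp only [zero_smul, add_zero]
  ring

lemma sum_inner_single {d N : ℕ} (m : Fin N → ℝ) (p' : Fin N → EuclideanSpace ℝ (Fin d))
    (i : Fin N) (g : EuclideanSpace ℝ (Fin d)) :
    (∑ k, ⟪p' k, (Pi.single i g : Fin N → EuclideanSpace ℝ (Fin d)) k⟫ / m k) = ⟪p' i, g⟫ / m i := by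
  rw [Finset.sum_eq_single i]
  · simp
  · intro k _ hk
    rw [Pi.single_eq_of_ne hk]
    simp
  · intro h; exact absurd (Finset.mem_univ i) h

lemma gradient_update_inner {d N : ℕ}
    (U : (Fin N → EuclideanSpace ℝ (Fin d)) → ℝ) (hU : Differentiable ℝ U)
    (q : Fin N → EuclideanSpace ℝ (Fin d)) (i : Fin N) (w : EuclideanSpace ℝ (Fin d)) :
    ⟪gradient (fun x => U (Function.update q i x)) (q i), w⟫
      = fderiv ℝ U q (Pi.single i w) := by
  classical
  set L : EuclideanSpace ℝ (Fin d) →L[ℝ] (Fin N → EuclideanSpace ℝ (Fin d)) :=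
    ContinuousLinearMap.pi (Pi.single i (ContinuousLinearMap.id ℝ (EuclideanSpace ℝ (Fin d))))
  have h1 : HasFDerivAt (Function.update q i) L (q i) := hasFDerivAt_update q (q i)
  have h2 : HasFDerivAt U (fderiv ℝ U q) (Function.update q i (q i)) := by
    rw [Function.update_eq_self]; exact (hU q).hasFDerivAt
  have h3 : HasFDerivAt (fun x => U (Function.update q i x))
      ((fderiv ℝ U q).comp L) (q i) := h2.comp (q i) h1
  have h4 : L w = Pi.single i w := by
    funext k
    by_cases hk : k = i
    · subst hk; simp [L]
    · simp [L, Pi.single_eq_of_ne hk]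
  rw [gradient, h3.fderiv, InnerProductSpace.toDual_symm_apply,
    ContinuousLinearMap.comp_apply, h4]


/-- the canonical Gibbs density is a stationary solution of the DPD
Fokker–Planck equation, given `σ² = 2γ/β` and `ω_D(r) = ω_R(r)²` for all `r > 0`. -/
theorem dpd_gibbs_stationary_fokker_planck
    {d N : ℕ} (hd : 1 ≤ d) (hN : 2 ≤ N)
    (m : Fin N → ℝ) (hm : ∀ k, 0 < m k)
    (β γ σ : ℝ) (hβ : 0 < β) (hγ : 0 < γ)
    (U : (Fin N → EuclideanSpace ℝ (Fin d)) → ℝ) (hU : Differentiable ℝ U)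
    (ωD ωR : ℝ → ℝ)
    (hσ : σ ^ 2 = 2 * γ / β)
    (hw : ∀ r : ℝ, 0 < r → ωD r = ωR r ^ 2)
    -- the Gibbs (canonical) density `ρ_β = exp(−β H)`
    (ρ : (Fin N → EuclideanSpace ℝ (Fin d)) → (Fin N → EuclideanSpace ℝ (Fin d)) → ℝ)
    (hρ : ρ = fun q p => Real.exp (-β * (∑ k, ‖p k‖ ^ 2 / (2 * m k) + U q)))
    -- a phase point with pairwise distinct positions
    (q p : Fin N → EuclideanSpace ℝ (Fin d))
    (hq : ∀ i j : Fin N, i ≠ j → q i ≠ q j) :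
    -- `−Σ_i (p_i/m_i)·∇_{q_i} ρ_β`
    -(∑ i, lineDeriv ℝ (fun q' => ρ q' p) q (Pi.single i ((m i)⁻¹ • p i)))
      -- `+ Σ_i (∇_{q_i}U)·∇_{p_i} ρ_β`
      + (∑ i, lineDeriv ℝ (fun p' => ρ q p') p
          (Pi.single i (gradient (fun x => U (Function.update q i x)) (q i))))
      -- `+ Σ_{i<j} ( D_{ij}[γ ω_D(r_ij)(e_ij·v_ij) ρ_β] + (σ²/2) ω_R(r_ij)² D_{ij}² ρ_β )`
      + (∑ i, ∑ j, if i < j then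
          lineDeriv ℝ
              (fun p' => γ * ωD ‖q i - q j‖ * ⟪unitSep q i j, relVel m p' i j⟫ * ρ q p')
              p (pairDir q i j)
            + σ ^ 2 / 2 * ωR ‖q i - q j‖ ^ 2 *
              lineDeriv ℝ (fun p' => lineDeriv ℝ (fun p'' => ρ q p'') p' (pairDir q i j))
                p (pairDir q i j)
          else 0)
      = 0 := by
  classical
  simp only [hρ]
  -- Part 1: the transport terms cancel pairwise in `i`.
  have h1 : ∀ i : Fin N,
      lineDeriv ℝ (fun q' => Real.exp (-β * ((∑ k, ‖p k‖ ^ 2 / (2 * m k)) + U q'))) q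
          (Pi.single i ((m i)⁻¹ • p i))
        = lineDeriv ℝ (fun p' => Real.exp (-β * ((∑ k, ‖p' k‖ ^ 2 / (2 * m k)) + U q))) p
          (Pi.single i (gradient (fun x => U (Function.update q i x)) (q i))) := by
    intro i
    set v : Fin N → EuclideanSpace ℝ (Fin d) := Pi.single i ((m i)⁻¹ • p i) with hv
    have hUd : HasDerivAt (fun t : ℝ => U (q + t • v)) (fderiv ℝ U q v) 0 := by
      have hline : HasDerivAt (fun t : ℝ => q + t • v) v 0 := by
        simpa using ((hasDerivAt_id (0:ℝ)).smul_const v).const_add q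
      have hf : HasFDerivAt U (fderiv ℝ U q) ((fun t : ℝ => q + t • v) 0) := by
        simpa using (hU q).hasFDerivAt
      exact hf.comp_hasDerivAt 0 hline
    have hL : HasLineDerivAt ℝ
        (fun q' => Real.exp (-β * ((∑ k, ‖p k‖ ^ 2 / (2 * m k)) + U q')))
        (-β * fderiv ℝ U q v *
          Real.exp (-β * ((∑ k, ‖p k‖ ^ 2 / (2 * m k)) + U q))) q v := by
      show HasDerivAt _ _ 0
      have h := ((hUd.const_add (∑ k, ‖p k‖ ^ 2 / (2 * m k))).const_mul (-β)).exp
      refine h.congr_deriv ?_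
      simp only [zero_smul, add_zero]
      ring
    rw [hL.lineDeriv,
      (gibbs_mom_hasLineDerivAt m hm β (U q) p
        (Pi.single i (gradient (fun x => U (Function.update q i x)) (q i)))).lineDeriv,
      sum_inner_single, hv,
      ← gradient_update_inner U hU q i ((m i)⁻¹ • p i),
      real_inner_smul_right, real_inner_comm]
    ring
  -- Part 2: each pair term vanishes.
  have h2 : ∀ i j : Fin N, i < j →
      lineDeriv ℝ (fun p' => γ * ωD ‖q i - q j‖ * ⟪unitSep q i j, relVel m p' i j⟫ *
            Real.exp (-β * ((∑ k, ‖p' k‖ ^ 2 / (2 * m k)) + U q)))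
          p (pairDir q i j)
        + σ ^ 2 / 2 * ωR ‖q i - q j‖ ^ 2 *
          lineDeriv ℝ (fun p' => lineDeriv ℝ
              (fun p'' => Real.exp (-β * ((∑ k, ‖p'' k‖ ^ 2 / (2 * m k)) + U q))) p'
              (pairDir q i j)) p (pairDir q i j)
        = 0 := by
    intro i j hij
    have hne : i ≠ j := ne_of_lt hij
    have hr : (0:ℝ) < ‖q i - q j‖ := by
      rw [norm_pos_iff]; exact sub_ne_zero_of_ne (hq i j hne)
    have hee : ⟪unitSep q i j, unitSep q i j⟫ = 1 := by
      have hn : ‖unitSep q i j‖ = 1 := by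
        rw [unitSep, norm_smul, norm_inv, norm_norm, inv_mul_cancel₀ hr.ne']
      rw [real_inner_self_eq_norm_sq, hn, one_pow]
    have hui : pairDir q i j i = unitSep q i j := by
      simp [pairDir, Pi.single_apply, hne, hne.symm]
    have huj : pairDir q i j j = -unitSep q i j := by
      simp [pairDir, Pi.single_apply, hne, hne.symm]
    have hsum_u : ∀ p' : Fin N → EuclideanSpace ℝ (Fin d),
        (∑ k, ⟪p' k, pairDir q i j k⟫ / m k) = ⟪unitSep q i j, relVel m p' i j⟫ := by
      intro p'
      have hterm : ∀ k : Fin N, ⟪p' k, pairDir q i j k⟫ / m k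
          = ⟪p' k, (Pi.single i (unitSep q i j) :
                Fin N → EuclideanSpace ℝ (Fin d)) k⟫ / m k
            - ⟪p' k, (Pi.single j (unitSep q i j) :
                Fin N → EuclideanSpace ℝ (Fin d)) k⟫ / m k := by
        intro k
        rw [pairDir, Pi.sub_apply, inner_sub_right, sub_div]
      rw [Finset.sum_congr rfl fun k _ => hterm k, Finset.sum_sub_distrib,
        sum_inner_single, sum_inner_single, relVel, inner_sub_right,
        real_inner_smul_right, real_inner_smul_right,
        real_inner_comm (p' i), real_inner_comm (p' j)]
      ring
    have hsline : ∀ t : ℝ,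
        ⟪unitSep q i j, relVel m (p + t • pairDir q i j) i j⟫
          = ⟪unitSep q i j, relVel m p i j⟫ + t * ((m i)⁻¹ + (m j)⁻¹) := by
      intro t
      simp only [relVel, Pi.add_apply, Pi.smul_apply, hui, huj, smul_add, smul_neg,
        smul_smul, inner_sub_right, inner_add_right, inner_neg_right,
        real_inner_smul_right, hee]
      ring
    have hG : HasDerivAt (fun t : ℝ =>
        Real.exp (-β * ((∑ k, ‖(p + t • pairDir q i j) k‖ ^ 2 / (2 * m k)) + U q)))
        (-β * ⟪unitSep q i j, relVel m p i j⟫ *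
          Real.exp (-β * ((∑ k, ‖p k‖ ^ 2 / (2 * m k)) + U q))) 0 := by
      have h := gibbs_mom_hasLineDerivAt m hm β (U q) p (pairDir q i j)
      rw [hsum_u p] at h
      exact h
    have hC1 : lineDeriv ℝ (fun p' => γ * ωD ‖q i - q j‖ *
          ⟪unitSep q i j, relVel m p' i j⟫ *
          Real.exp (-β * ((∑ k, ‖p' k‖ ^ 2 / (2 * m k)) + U q))) p (pairDir q i j)
        = γ * ωD ‖q i - q j‖ * (((m i)⁻¹ + (m j)⁻¹) *
              Real.exp (-β * ((∑ k, ‖p k‖ ^ 2 / (2 * m k)) + U q))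
            + ⟪unitSep q i j, relVel m p i j⟫ *
              (-β * ⟪unitSep q i j, relVel m p i j⟫ *
                Real.exp (-β * ((∑ k, ‖p k‖ ^ 2 / (2 * m k)) + U q)))) := by
      apply HasLineDerivAt.lineDeriv
      show HasDerivAt (fun t : ℝ => γ * ωD ‖q i - q j‖ *
          ⟪unitSep q i j, relVel m (p + t • pairDir q i j) i j⟫ *
          Real.exp (-β * ((∑ k, ‖(p + t • pairDir q i j) k‖ ^ 2 / (2 * m k)) + U q))) _ 0
      simp only [hsline]
      have hlin : HasDerivAt (fun t : ℝ => γ * ωD ‖q i - q j‖ *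
          (⟪unitSep q i j, relVel m p i j⟫ + t * ((m i)⁻¹ + (m j)⁻¹)))
          (γ * ωD ‖q i - q j‖ * ((m i)⁻¹ + (m j)⁻¹)) 0 := by
        exact ((hasDerivAt_mul_const ((m i)⁻¹ + (m j)⁻¹)).const_add
          ⟪unitSep q i j, relVel m p i j⟫).const_mul (γ * ωD ‖q i - q j‖)
      have h := hlin.mul hG
      refine h.congr_deriv ?_
      simp only [zero_smul, add_zero, zero_mul]
      try ring
    have hinner : (fun p' => lineDeriv ℝ (fun p'' =>
          Real.exp (-β * ((∑ k, ‖p'' k‖ ^ 2 / (2 * m k)) + U q))) p' (pairDir q i j))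
        = fun p' => -β * ⟪unitSep q i j, relVel m p' i j⟫ *
            Real.exp (-β * ((∑ k, ‖p' k‖ ^ 2 / (2 * m k)) + U q)) := by
      funext p'
      rw [(gibbs_mom_hasLineDerivAt m hm β (U q) p' (pairDir q i j)).lineDeriv, hsum_u p']
    have hC2 : lineDeriv ℝ (fun p' => lineDeriv ℝ
          (fun p'' => Real.exp (-β * ((∑ k, ‖p'' k‖ ^ 2 / (2 * m k)) + U q))) p'
          (pairDir q i j)) p (pairDir q i j)
        = -β * ((m i)⁻¹ + (m j)⁻¹) *
              Real.exp (-β * ((∑ k, ‖p k‖ ^ 2 / (2 * m k)) + U q))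
            + (-β * ⟪unitSep q i j, relVel m p i j⟫) *
              (-β * ⟪unitSep q i j, relVel m p i j⟫ *
                Real.exp (-β * ((∑ k, ‖p k‖ ^ 2 / (2 * m k)) + U q))) := by
      rw [hinner]
      apply HasLineDerivAt.lineDeriv
      show HasDerivAt (fun t : ℝ =>
          -β * ⟪unitSep q i j, relVel m (p + t • pairDir q i j) i j⟫ *
          Real.exp (-β * ((∑ k, ‖(p + t • pairDir q i j) k‖ ^ 2 / (2 * m k)) + U q))) _ 0
      simp only [hsline]
      have hlin2 : HasDerivAt (fun t : ℝ =>
          -β * (⟪unitSep q i j, relVel m p i j⟫ + t * ((m i)⁻¹ + (m j)⁻¹)))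
          (-β * ((m i)⁻¹ + (m j)⁻¹)) 0 := by
        exact ((hasDerivAt_mul_const ((m i)⁻¹ + (m j)⁻¹)).const_add
          ⟪unitSep q i j, relVel m p i j⟫).const_mul (-β)
      have h := hlin2.mul hG
      refine h.congr_deriv ?_
      simp only [zero_smul, add_zero, zero_mul]
      try ring
    rw [hC1, hC2, hw _ hr, hσ]
    field_simp
    ring
  have e1 : (∑ i, lineDeriv ℝ
        (fun q' => Real.exp (-β * ((∑ k, ‖p k‖ ^ 2 / (2 * m k)) + U q'))) q
        (Pi.single i ((m i)⁻¹ • p i)))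
      = ∑ i, lineDeriv ℝ
        (fun p' => Real.exp (-β * ((∑ k, ‖p' k‖ ^ 2 / (2 * m k)) + U q))) p
        (Pi.single i (gradient (fun x => U (Function.update q i x)) (q i))) :=
    Finset.sum_congr rfl fun i _ => h1 i
  have e2 : (∑ i : Fin N, ∑ j : Fin N, if i < j then
        lineDeriv ℝ (fun p' => γ * ωD ‖q i - q j‖ *
            ⟪unitSep q i j, relVel m p' i j⟫ *
            Real.exp (-β * ((∑ k, ‖p' k‖ ^ 2 / (2 * m k)) + U q)))
          p (pairDir q i j)
        + σ ^ 2 / 2 * ωR ‖q i - q j‖ ^ 2 *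
          lineDeriv ℝ (fun p' => lineDeriv ℝ
              (fun p'' => Real.exp (-β * ((∑ k, ‖p'' k‖ ^ 2 / (2 * m k)) + U q))) p'
              (pairDir q i j)) p (pairDir q i j)
      else 0) = 0 :=
    Finset.sum_eq_zero fun i _ => Finset.sum_eq_zero fun j _ => by
      by_cases hij : i < j
      · rw [if_pos hij]; exact h2 i j hij
      · rw [if_neg hij]
  rw [e1, e2]
  ring
end
end

section
/- Baker–Campbell–Hausdorff expansion for a successive pairwise splitting: let 𝔸 be a complete normed algebra over ℝ (a Banach algebra) and O₁, …, O_m ∈ 𝔸. Then, as t → 0, the ordered product of exponentials satisfies ‖ exp(t O₁) · exp(t O₂) ⋯ exp(t O_m) − exp( t (O₁ + ⋯ + O_m) + (t²/2) Σ_{1 ≤ k < l ≤ m} (O_k O_l − O_l O_k) ) ‖ = O(t³); that is, the difference is big-O of t³ in the filter of neighbourhoods of 0. -/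
open Asymptotics

section BCHAux
open NormedSpace Filter

variable {𝔸 : Type*} [NormedRing 𝔸] [NormedAlgebra ℝ 𝔸] [CompleteSpace 𝔸]

theorem smul_pow_isBigO (n : ℕ) (hn : 3 ≤ n) (c : 𝔸) :
    (fun t : ℝ => t ^ n • c) =O[nhds (0:ℝ)] fun t => t ^ 3 := by
  rw [isBigO_iff]
  refine ⟨‖c‖, ?_⟩
  have h1 : ∀ᶠ t : ℝ in nhds 0, |t| ≤ 1 := by
    filter_upwards [Metric.closedBall_mem_nhds (0:ℝ) one_pos] with t ht
    simpa [Real.dist_eq] using ht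
  filter_upwards [h1] with t ht
  rw [norm_smul, norm_pow, norm_pow, Real.norm_eq_abs]
  have : |t| ^ n ≤ |t| ^ 3 := pow_le_pow_of_le_one (abs_nonneg t) ht hn
  calc |t| ^ n * ‖c‖ ≤ |t| ^ 3 * ‖c‖ := mul_le_mul_of_nonneg_right this (norm_nonneg c)
    _ = ‖c‖ * |t| ^ 3 := by ring

/-- second-order approximation with O(t³) remainder -/
def Approx3 (f : ℝ → 𝔸) (a₀ a₁ a₂ : 𝔸) : Prop :=
  (fun t : ℝ => f t - (a₀ + t • a₁ + t ^ 2 • a₂)) =O[nhds (0:ℝ)] fun t => t ^ 3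

theorem exp_approx3 (X Y : 𝔸) :
    Approx3 (fun t : ℝ => exp (t • X + t ^ 2 • Y)) 1 X ((2:ℝ)⁻¹ • (X*X) + Y) := by
  set z : ℝ → 𝔸 := fun t => t • X + t ^ 2 • Y with hzdef
  have h := (exp_hasFPowerSeriesAt_zero (𝕂 := ℝ) (𝔸 := 𝔸)).isBigO_sub_partialSum_pow 3
  have hz : Tendsto z (nhds 0) (nhds 0) := by
    have hc : Continuous z := by fun_prop
    have h0 : z 0 = 0 := by simp [hzdef]
    simpa [h0] using hc.tendsto 0
  have h2 := h.comp_tendsto hz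
  have hzO : z =O[nhds (0:ℝ)] fun t : ℝ => t := by
    have hb : (fun t : ℝ => X + t • Y) =O[nhds (0:ℝ)] (fun _ => (1:ℝ)) := by
      apply Filter.Tendsto.isBigO_one
      have : Continuous (fun t : ℝ => X + t • Y) := by fun_prop
      exact this.tendsto 0
    have h' := (isBigO_refl (fun t : ℝ => t) (nhds 0)).smul hb
    refine h'.congr' ?_ ?_
    · filter_upwards with t
      simp [hzdef, smul_add, smul_smul, pow_two]
    · filter_upwards with t
      simp
  have hcube : (fun t : ℝ => ‖z t‖ ^ 3) =O[nhds (0:ℝ)] fun t => t ^ 3 := hzO.norm_left.pow 3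
  have h3 : (fun t : ℝ => exp (z t) - ((expSeries ℝ 𝔸).partialSum 3 (z t)))
      =O[nhds (0:ℝ)] fun t => t ^ 3 := by
    refine (h2.congr' ?_ (by rfl)).trans hcube
    filter_upwards with t
    simp
  have hps : ∀ w : 𝔸, (expSeries ℝ 𝔸).partialSum 3 w = 1 + w + (2:ℝ)⁻¹ • (w * w) := by
    intro w
    simp [FormalMultilinearSeries.partialSum, Finset.sum_range_succ, expSeries_apply_eq,
      Nat.factorial, pow_two]
  have hpoly : (fun t : ℝ => (1 + z t + (2:ℝ)⁻¹ • (z t * z t)) -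
      (1 + t • X + t ^ 2 • ((2:ℝ)⁻¹ • (X*X) + Y)))
      =O[nhds (0:ℝ)] fun t => t ^ 3 := by
    have heq : ∀ t : ℝ, (1 + z t + (2:ℝ)⁻¹ • (z t * z t)) -
        (1 + t • X + t ^ 2 • ((2:ℝ)⁻¹ • (X*X) + Y)) =
        t ^ 3 • ((2:ℝ)⁻¹ • (X*Y + Y*X)) + t ^ 4 • ((2:ℝ)⁻¹ • (Y*Y)) := by
      intro t
      simp only [hzdef, add_mul, mul_add, smul_add, smul_sub, smul_smul,
        smul_mul_assoc, mul_smul_comm]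
      module
    refine ((smul_pow_isBigO 3 le_rfl ((2:ℝ)⁻¹ • (X*Y + Y*X))).add (smul_pow_isBigO 4 (by norm_num) ((2:ℝ)⁻¹ • (Y*Y)))).congr'
      ?_ (by rfl)
    filter_upwards with t
    rw [heq]
  refine (h3.add hpoly).congr' ?_ (by rfl)
  filter_upwards with t
  rw [hps]
  abel

theorem Approx3.tendsto_a₀ {f : ℝ → 𝔸} {a₀ a₁ a₂ : 𝔸} (hf : Approx3 f a₀ a₁ a₂) :
    Filter.Tendsto f (nhds 0) (nhds a₀) := by
  have h0 : Tendsto (fun t : ℝ => t ^ 3) (nhds 0) (nhds 0) := by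
    have : Continuous (fun t : ℝ => t ^ 3) := by fun_prop
    simpa using this.tendsto 0
  have h1 : Tendsto (fun t : ℝ => f t - (a₀ + t • a₁ + t ^ 2 • a₂)) (nhds 0) (nhds 0) :=
    hf.trans_tendsto h0
  have h2 : Tendsto (fun t : ℝ => a₀ + t • a₁ + t ^ 2 • a₂) (nhds 0) (nhds a₀) := by
    have hc : Continuous (fun t : ℝ => a₀ + t • a₁ + t ^ 2 • a₂) := by fun_prop
    simpa using hc.tendsto 0
  have := h1.add h2
  simpa using this

theorem Approx3.mul {f g : ℝ → 𝔸} {a₀ a₁ a₂ b₀ b₁ b₂ : 𝔸}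
    (hf : Approx3 f a₀ a₁ a₂) (hg : Approx3 g b₀ b₁ b₂) :
    Approx3 (fun t => f t * g t) (a₀*b₀) (a₀*b₁ + a₁*b₀) (a₀*b₂ + a₁*b₁ + a₂*b₀) := by
  set pf : ℝ → 𝔸 := fun t => a₀ + t • a₁ + t ^ 2 • a₂ with hpf
  set pg : ℝ → 𝔸 := fun t => b₀ + t • b₁ + t ^ 2 • b₂ with hpg
  have hgO : g =O[nhds (0:ℝ)] (fun _ => (1:ℝ)) := hg.tendsto_a₀.isBigO_one ℝ
  have hpfO : pf =O[nhds (0:ℝ)] (fun _ => (1:ℝ)) := by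
    apply Filter.Tendsto.isBigO_one
    have hc : Continuous pf := by fun_prop
    simpa using hc.tendsto 0
  have hf' : (fun t : ℝ => f t - pf t) =O[nhds (0:ℝ)] fun t => t ^ 3 := hf
  have hg' : (fun t : ℝ => g t - pg t) =O[nhds (0:ℝ)] fun t => t ^ 3 := hg
  have t1 : (fun t : ℝ => (f t - pf t) * g t) =O[nhds (0:ℝ)] fun t => t ^ 3 := by
    have := IsBigO.mul hf' hgO
    simpa using this
  have t2 : (fun t : ℝ => pf t * (g t - pg t)) =O[nhds (0:ℝ)] fun t => t ^ 3 := by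
    have := IsBigO.mul hpfO hg'
    simpa using this
  have t3 : (fun t : ℝ => pf t * pg t -
      (a₀*b₀ + t • (a₀*b₁ + a₁*b₀) + t ^ 2 • (a₀*b₂ + a₁*b₁ + a₂*b₀)))
      =O[nhds (0:ℝ)] fun t => t ^ 3 := by
    have heq : ∀ t : ℝ, pf t * pg t -
        (a₀*b₀ + t • (a₀*b₁ + a₁*b₀) + t ^ 2 • (a₀*b₂ + a₁*b₁ + a₂*b₀)) =
        t ^ 3 • (a₁*b₂ + a₂*b₁) + t ^ 4 • (a₂*b₂) := by
      intro t
      simp only [hpf, hpg, add_mul, mul_add, smul_add, smul_sub, smul_smul,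
        smul_mul_assoc, mul_smul_comm]
      module
    refine ((smul_pow_isBigO 3 le_rfl (a₁*b₂ + a₂*b₁)).add
      (smul_pow_isBigO 4 (by norm_num) (a₂*b₂))).congr' ?_ (by rfl)
    filter_upwards with t
    rw [heq]
  refine ((t1.add t2).add t3).congr' ?_ (by rfl)
  filter_upwards with t
  show (f t - pf t) * g t + pf t * (g t - pg t) + (pf t * pg t - _) = _
  rw [sub_mul, mul_sub]
  abel

/-- the second-order coefficient of an ordered product of exponentials -/
noncomputable def bchQ : List 𝔸 → 𝔸
  | [] => 0
  | X :: L => (2:ℝ)⁻¹ • (X*X) + X * L.sum + bchQ L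

theorem list_approx3 (L : List 𝔸) :
    Approx3 (fun t => (L.map fun X => exp (t • X)).prod) 1 L.sum (bchQ L) := by
  induction L with
  | nil =>
    simp only [List.map_nil, List.prod_nil, List.sum_nil, bchQ]
    unfold Approx3
    refine (isBigO_zero _ _).congr' ?_ (by rfl)
    filter_upwards with t
    simp
  | cons X L ih =>
    have hX : Approx3 (fun t : ℝ => exp (t • X)) 1 X ((2:ℝ)⁻¹ • (X*X)) := by
      have h := exp_approx3 X (0:𝔸)
      refine ?_
      have : ∀ t : ℝ, t • X + t ^ 2 • (0:𝔸) = t • X := by intro t; simp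
      simp only [this, add_zero] at h
      exact h
    have h := hX.mul ih
    have e1 : (1:𝔸) * L.sum + X * 1 = (X :: L).sum := by
      simp [List.sum_cons]; abel
    have e2 : (1:𝔸) * bchQ L + X * L.sum + ((2:ℝ)⁻¹ • (X*X)) * 1 = bchQ (X :: L) := by
      simp [bchQ]; abel
    rw [e1, e2, one_mul] at h
    refine h.congr' ?_ (by rfl)
    filter_upwards with t
    simp [List.prod_cons]

theorem bchQ_ofFn : ∀ {m : ℕ} (O : Fin m → 𝔸),
    bchQ (List.ofFn O) = (2:ℝ)⁻¹ • ((∑ k, O k) * (∑ k, O k)) +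
      (2:ℝ)⁻¹ • (∑ k, ∑ l, if k < l then O k * O l - O l * O k else 0)
  | 0, O => by simp [bchQ]
  | (m+1), O => by
    have IH := bchQ_ofFn (fun i : Fin m => O i.succ)
    set S := ∑ i : Fin m, O i.succ with hS
    set B' := ∑ k : Fin m, ∑ l : Fin m,
      if k < l then O k.succ * O l.succ - O l.succ * O k.succ else 0 with hB'
    have h1 : List.ofFn O = O 0 :: List.ofFn (fun i => O i.succ) := List.ofFn_succ
    have hsum : (List.ofFn fun i : Fin m => O i.succ).sum = S := by
      rw [hS]; exact List.sum_ofFn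
    have hA : ∑ k : Fin (m+1), O k = O 0 + S := Fin.sum_univ_succ O
    have hB : (∑ k : Fin (m+1), ∑ l, if k < l then O k * O l - O l * O k else 0)
        = (O 0 * S - S * O 0) + B' := by
      rw [Fin.sum_univ_succ]
      congr 1
      · rw [Fin.sum_univ_succ]
        simp only [lt_irrefl, if_false, Fin.succ_pos, if_true, zero_add]
        rw [Finset.sum_sub_distrib, ← Finset.mul_sum, ← Finset.sum_mul, hS]
      · rw [hB']
        refine Finset.sum_congr rfl fun k _ => ?_
        rw [Fin.sum_univ_succ]
        simp [Fin.succ_lt_succ_iff]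
    rw [h1]
    show (2:ℝ)⁻¹ • (O 0 * O 0) + O 0 * (List.ofFn fun i : Fin m => O i.succ).sum
        + bchQ (List.ofFn fun i : Fin m => O i.succ) = _
    rw [hsum, IH, hA, hB]
    simp only [add_mul, mul_add, smul_add, smul_sub]
    module

theorem bch_successive_pairwise_splitting'
    {m : ℕ} (O : Fin m → 𝔸) :
    (fun t : ℝ =>
        (List.ofFn fun k => NormedSpace.exp (t • O k)).prod -
          NormedSpace.exp (t • ∑ k, O k +
            (t ^ 2 / 2) • ∑ k, ∑ l, if k < l then O k * O l - O l * O k else 0))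
      =O[nhds (0 : ℝ)] fun t => t ^ 3 := by
  set A := ∑ k, O k with hA
  set B := ∑ k, ∑ l, if k < l then O k * O l - O l * O k else 0 with hB
  have hP : Approx3 (fun t : ℝ => (List.ofFn fun k => exp (t • O k)).prod)
      1 A ((2:ℝ)⁻¹ • (A*A) + (2:ℝ)⁻¹ • B) := by
    have h := list_approx3 (List.ofFn O)
    have hmap : ∀ t : ℝ, ((List.ofFn O).map fun X => exp (t • X)).prod
        = (List.ofFn fun k => exp (t • O k)).prod := by
      intro t; rw [List.map_ofFn]; rfl
    have hsum : (List.ofFn O).sum = A := by rw [hA]; exact List.sum_ofFn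
    have hq : bchQ (List.ofFn O) = (2:ℝ)⁻¹ • (A*A) + (2:ℝ)⁻¹ • B := bchQ_ofFn O
    rw [hsum, hq] at h
    refine h.congr' ?_ (by rfl)
    filter_upwards with t
    rw [hmap]
  have hE : Approx3 (fun t : ℝ => exp (t • A + (t ^ 2 / 2) • B))
      1 A ((2:ℝ)⁻¹ • (A*A) + (2:ℝ)⁻¹ • B) := by
    have h := exp_approx3 A ((2:ℝ)⁻¹ • B)
    refine h.congr' ?_ (by rfl)
    filter_upwards with t
    congr 2
    rw [smul_smul, div_eq_mul_inv]
  have := hP.sub hE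
  refine this.congr' ?_ (by rfl)
  filter_upwards with t
  show _ - _ - (_ - _) = _
  abel

end BCHAux

/-- Baker–Campbell–Hausdorff expansion for a successive pairwise splitting in a
Banach algebra: the ordered product `exp(tO₁)⋯exp(tO_m)` agrees with
`exp(t ΣO_k + (t²/2) Σ_{k<l} [O_k, O_l])` up to `O(t³)` as `t → 0`. -/
theorem bch_successive_pairwise_splitting
    {𝔸 : Type*} [NormedRing 𝔸] [NormedAlgebra ℝ 𝔸] [CompleteSpace 𝔸]
    {m : ℕ} (O : Fin m → 𝔸) :
    (fun t : ℝ =>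
        (List.ofFn fun k => NormedSpace.exp (t • O k)).prod -
          NormedSpace.exp (t • ∑ k, O k +
            (t ^ 2 / 2) • ∑ k, ∑ l, if k < l then O k * O l - O l * O k else 0))
      =O[nhds (0 : ℝ)] fun t => t ^ 3 :=
  bch_successive_pairwise_splitting' O
end

section
/- First-order perturbation operator of the ABOBA splitting: let 𝔸 be a complete normed algebra over ℝ (a Banach algebra), A, B ∈ 𝔸, and O₁, …, O_m ∈ 𝔸. Then, as t → 0, ‖ exp((t/2) A) · exp((t/2) B) · exp(t O₁) ⋯ exp(t O_m) · exp((t/2) B) · exp((t/2) A) − exp( t (A + B + O₁ + ⋯ + O_m) + (t²/2) Σ_{1 ≤ k < l ≤ m} (O_k O_l − O_l O_k) ) ‖ = O(t³). In particular, the second-order term in the logarithm of the ABOBA propagator involves only the commutators among the pairwise operators O_k (as in the operator L†_{1,ABOBA} of the ABOBA method), with no contribution from A or B. -/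
set_option linter.unusedSectionVars false
set_option maxHeartbeats 1000000

open Asymptotics Filter

section AbobaAux
variable {𝔸 : Type*} [NormedRing 𝔸] [NormedAlgebra ℝ 𝔸] [CompleteSpace 𝔸]

private lemma exp_quad0 :
    (fun y : 𝔸 => NormedSpace.exp y - (1 + y + (2⁻¹ : ℝ) • (y * y))) =O[nhds 0]
      fun y : 𝔸 => ‖y‖ ^ 3 := by
  have h := (NormedSpace.exp_hasFPowerSeriesAt_zero (𝕂 := ℝ) (𝔸 := 𝔸)).isBigO_sub_partialSum_pow 3
  simp only [zero_add] at h
  refine h.congr (fun y => ?_) (fun _ => rfl)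
  congr 1
  simp [FormalMultilinearSeries.partialSum, Finset.sum_range_succ,
    NormedSpace.expSeries_apply_eq, pow_two]

private lemma isBigO_cube_smul (g : ℝ → 𝔸) (hg : ContinuousAt g 0) :
    (fun t : ℝ => t ^ 3 • g t) =O[nhds 0] fun t => t ^ 3 := by
  have hb : ∀ᶠ t in nhds (0 : ℝ), ‖g t‖ < ‖g 0‖ + 1 :=
    (hg.norm.tendsto).eventually_lt_const (lt_add_one _)
  refine IsBigO.of_bound (‖g 0‖ + 1) (hb.mono fun t ht => ?_)
  rw [norm_smul]
  calc ‖t ^ 3‖ * ‖g t‖ ≤ ‖t ^ 3‖ * (‖g 0‖ + 1) :=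
        mul_le_mul_of_nonneg_left ht.le (norm_nonneg _)
    _ = (‖g 0‖ + 1) * ‖t ^ 3‖ := mul_comm _ _

/-- `f t = 1 + t p + t² q + O(t³)` near `0`. -/
private def QuadApprox (f : ℝ → 𝔸) (p q : 𝔸) : Prop :=
  (fun t : ℝ => f t - (1 + t • p + t ^ 2 • q)) =O[nhds (0 : ℝ)] fun t => t ^ 3

private lemma QuadApprox.congr_fun {f g : ℝ → 𝔸} {p q : 𝔸} (h : QuadApprox f p q)
    (hfg : ∀ t, f t = g t) : QuadApprox g p q := by
  unfold QuadApprox at *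
  simpa only [hfg] using h

private lemma QuadApprox.congr_q {f : ℝ → 𝔸} {p q q' : 𝔸} (h : QuadApprox f p q)
    (hq : q = q') : QuadApprox f p q' := hq ▸ h

private lemma quadApprox_exp (X : 𝔸) :
    QuadApprox (fun t : ℝ => NormedSpace.exp (t • X)) X ((2⁻¹ : ℝ) • (X * X)) := by
  have htend : Filter.Tendsto (fun t : ℝ => t • X) (nhds 0) (nhds 0) := by
    have : Continuous fun t : ℝ => t • X := by fun_prop
    simpa using this.tendsto 0
  have h1 := (exp_quad0 (𝔸 := 𝔸)).comp_tendsto htend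
  have h2 : (fun t : ℝ => ‖t • X‖ ^ 3) =O[nhds 0] fun t => t ^ 3 := by
    refine IsBigO.of_bound (‖X‖ ^ 3) (Eventually.of_forall fun t => ?_)
    rw [norm_smul]
    simp [mul_pow, abs_pow, mul_comm, norm_pow]
  have h3 := h1.trans h2
  refine h3.congr (fun t => ?_) (fun _ => rfl)
  simp only [Function.comp]
  congr 2
  rw [smul_mul_smul_comm, ← pow_two]
  module

private lemma quadApprox_exp_quad (X D : 𝔸) :
    QuadApprox (fun t : ℝ => NormedSpace.exp (t • X + t ^ 2 • D)) X
      (D + (2⁻¹ : ℝ) • (X * X)) := by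
  set y : ℝ → 𝔸 := fun t => t • X + t ^ 2 • D with hy
  have htend : Filter.Tendsto y (nhds 0) (nhds 0) := by
    have : Continuous y := by fun_prop
    simpa [hy] using this.tendsto 0
  have h1 := (exp_quad0 (𝔸 := 𝔸)).comp_tendsto htend
  have h2 : (fun t : ℝ => ‖y t‖ ^ 3) =O[nhds 0] fun t => t ^ 3 := by
    refine IsBigO.of_bound ((‖X‖ + ‖D‖) ^ 3) ?_
    filter_upwards [Metric.ball_mem_nhds (0 : ℝ) one_pos] with t ht
    have ht1 : |t| ≤ 1 := by
      rw [Metric.mem_ball, Real.dist_eq, sub_zero] at ht; exact ht.le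
    have hyt : ‖y t‖ ≤ |t| * (‖X‖ + ‖D‖) := by
      calc ‖y t‖ ≤ ‖t • X‖ + ‖t ^ 2 • D‖ := norm_add_le _ _
        _ = |t| * ‖X‖ + |t| ^ 2 * ‖D‖ := by
            simp [norm_smul, Real.norm_eq_abs, abs_pow, pow_two, mul_assoc]
        _ ≤ |t| * ‖X‖ + |t| * ‖D‖ := by
            have : |t| ^ 2 ≤ |t| := by nlinarith [abs_nonneg t]
            nlinarith [norm_nonneg D]
        _ = |t| * (‖X‖ + ‖D‖) := by ring
    have h0 : ‖y t‖ ^ 3 ≤ (|t| * (‖X‖ + ‖D‖)) ^ 3 :=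
      pow_le_pow_left₀ (norm_nonneg _) hyt 3
    calc ‖‖y t‖ ^ 3‖ = ‖y t‖ ^ 3 := by
          rw [Real.norm_eq_abs, abs_pow, abs_of_nonneg (norm_nonneg _)]
      _ ≤ (|t| * (‖X‖ + ‖D‖)) ^ 3 := h0
      _ = (‖X‖ + ‖D‖) ^ 3 * ‖t ^ 3‖ := by
          rw [mul_pow, Real.norm_eq_abs, abs_pow]; ring
  have h3 := h1.trans h2
  have h4 : (fun t : ℝ => (1 + y t + (2⁻¹ : ℝ) • (y t * y t)) -
      (1 + t • X + t ^ 2 • (D + (2⁻¹ : ℝ) • (X * X))))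
      =O[nhds 0] fun t => t ^ 3 := by
    have key : ∀ t : ℝ, (1 + y t + (2⁻¹ : ℝ) • (y t * y t)) -
        (1 + t • X + t ^ 2 • (D + (2⁻¹ : ℝ) • (X * X))) =
        t ^ 3 • ((2⁻¹ : ℝ) • (X * D + D * X) + t • ((2⁻¹ : ℝ) • (D * D))) := by
      intro t
      simp only [hy, mul_add, add_mul, smul_mul_assoc, mul_smul_comm, smul_add, smul_smul,
        smul_sub, sub_smul]
      match_scalars <;> ring
    rw [funext key]
    exact isBigO_cube_smul _ (by fun_prop)
  have := (h3.congr (fun t => rfl) (fun _ => rfl)).add h4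
  refine this.congr (fun t => ?_) (fun _ => rfl)
  simp only [Function.comp]
  abel

private lemma QuadApprox.isBigO_one {f : ℝ → 𝔸} {p q : 𝔸} (h : QuadApprox f p q) :
    f =O[nhds (0 : ℝ)] (fun _ => (1 : ℝ)) := by
  have h1 : (fun t : ℝ => t ^ 3) =O[nhds (0 : ℝ)] (fun _ => (1 : ℝ)) := by
    have : Filter.Tendsto (fun t : ℝ => t ^ 3) (nhds 0) (nhds 0) := by
      simpa using (continuous_pow 3).tendsto (0 : ℝ)
    exact this.isBigO_one ℝ
  have h2 : (fun t : ℝ => (1 : 𝔸) + t • p + t ^ 2 • q) =O[nhds (0 : ℝ)]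
      (fun _ => (1 : ℝ)) := by
    have : Continuous (fun t : ℝ => (1 : 𝔸) + t • p + t ^ 2 • q) := by fun_prop
    exact (this.tendsto 0).isBigO_one ℝ
  have := (h.trans h1).add h2
  refine this.congr (fun t => ?_) (fun _ => rfl)
  abel

private lemma QuadApprox.mul {f g : ℝ → 𝔸} {p q p' q' : 𝔸}
    (hf : QuadApprox f p q) (hg : QuadApprox g p' q') :
    QuadApprox (fun t => f t * g t) (p + p') (q + q' + p * p') := by
  have hgo := hg.isBigO_one
  have hqf : (fun t : ℝ => (1 : 𝔸) + t • p + t ^ 2 • q) =O[nhds (0 : ℝ)]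
      (fun _ => (1 : ℝ)) := by
    have : Continuous (fun t : ℝ => (1 : 𝔸) + t • p + t ^ 2 • q) := by fun_prop
    exact (this.tendsto 0).isBigO_one ℝ
  have T1 : (fun t : ℝ => (f t - (1 + t • p + t ^ 2 • q)) * g t) =O[nhds 0]
      fun t => t ^ 3 := by
    have := IsBigO.mul hf hgo
    refine this.congr (fun t => rfl) (fun t => ?_)
    simp
  have T2 : (fun t : ℝ => (1 + t • p + t ^ 2 • q) * (g t - (1 + t • p' + t ^ 2 • q')))
      =O[nhds 0] fun t => t ^ 3 := by
    have := IsBigO.mul hqf hg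
    refine this.congr (fun t => rfl) (fun t => ?_)
    simp
  have T3 : (fun t : ℝ => (1 + t • p + t ^ 2 • q) * (1 + t • p' + t ^ 2 • q') -
      (1 + t • (p + p') + t ^ 2 • (q + q' + p * p'))) =O[nhds 0] fun t => t ^ 3 := by
    have key : ∀ t : ℝ, (1 + t • p + t ^ 2 • q) * (1 + t • p' + t ^ 2 • q') -
        (1 + t • (p + p') + t ^ 2 • (q + q' + p * p')) =
        t ^ 3 • ((p * q' + q * p') + t • (q * q')) := by
      intro t
      simp only [mul_add, add_mul, smul_mul_assoc, mul_smul_comm, smul_add, smul_smul,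
        mul_one, one_mul]
      match_scalars <;> ring
    rw [funext key]
    exact isBigO_cube_smul _ (by fun_prop)
  have := (T1.add T2).add T3
  refine this.congr (fun t => ?_) (fun _ => rfl)
  noncomm_ring

private noncomputable def qfList : List 𝔸 → 𝔸
  | [] => 0
  | x :: L => (2⁻¹ : ℝ) • (x * x) + x * L.sum + qfList L

@[simp] private lemma qfList_nil : qfList ([] : List 𝔸) = 0 := rfl

@[simp] private lemma qfList_cons (x : 𝔸) (L : List 𝔸) :
    qfList (x :: L) = (2⁻¹ : ℝ) • (x * x) + x * L.sum + qfList L := rfl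

private lemma quadApprox_one : QuadApprox (fun _ : ℝ => (1 : 𝔸)) 0 0 := by
  unfold QuadApprox
  have h : (fun _ : ℝ => (0 : 𝔸)) =O[nhds (0 : ℝ)] fun t => t ^ 3 := isBigO_zero _ _
  simpa using h

private lemma quadApprox_list (L : List 𝔸) :
    QuadApprox (fun t : ℝ => (L.map fun x => NormedSpace.exp (t • x)).prod)
      L.sum (qfList L) := by
  induction L with
  | nil =>
    exact quadApprox_one.congr_fun fun t => by simp
  | cons x L ih =>
    have h := (quadApprox_exp x).mul ih
    rw [List.sum_cons, qfList_cons]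
    refine (h.congr_fun fun t => ?_).congr_q (by abel)
    simp [List.prod_cons]

private lemma qfList_ofFn {m : ℕ} (O : Fin m → 𝔸) :
    qfList (List.ofFn O) = (2⁻¹ : ℝ) • ((List.ofFn O).sum * (List.ofFn O).sum) +
      (2⁻¹ : ℝ) • ∑ k, ∑ l, if k < l then O k * O l - O l * O k else 0 := by
  induction m with
  | zero => simp
  | succ n ih =>
    rw [List.ofFn_succ]
    have hW : (∑ k, ∑ l, if k < l then O k * O l - O l * O k else 0) =
        (O 0 * (∑ k : Fin n, O k.succ) - (∑ k : Fin n, O k.succ) * O 0) +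
        ∑ k : Fin n, ∑ l : Fin n,
          if k < l then O k.succ * O l.succ - O l.succ * O k.succ else 0 := by
      rw [Fin.sum_univ_succ]
      congr 1
      · rw [Fin.sum_univ_succ]
        simp only [lt_self_iff_false, if_false, zero_add, Fin.succ_pos, if_true]
        rw [Finset.sum_sub_distrib, ← Finset.mul_sum, ← Finset.sum_mul]
      · apply Finset.sum_congr rfl; intro k _
        rw [Fin.sum_univ_succ]
        have h0 : ¬ (k.succ : Fin (n + 1)) < 0 := by simp
        simp only [h0, if_false, zero_add, Fin.succ_lt_succ_iff]
    rw [hW, qfList_cons, ih (fun k => O k.succ), List.sum_cons, List.sum_ofFn]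
    set a := O 0
    set S := ∑ k : Fin n, O k.succ
    set W := ∑ k : Fin n, ∑ l : Fin n,
      if k < l then O k.succ * O l.succ - O l.succ * O k.succ else 0
    simp only [mul_add, add_mul, smul_add, smul_sub]
    match_scalars <;> ring

end AbobaAux

/-- first-order perturbation operator of the ABOBA splitting: the ABOBA
propagator `exp((t/2)A) exp((t/2)B) exp(tO₁)⋯exp(tO_m) exp((t/2)B) exp((t/2)A)` agrees with
`exp(t(A + B + ΣO_k) + (t²/2) Σ_{k<l} [O_k, O_l])` up to `O(t³)` as `t → 0`; in particular
the second-order term in the logarithm involves only commutators among the pairwise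
operators `O_k`, with no contribution from `A` or `B`. -/
theorem aboba_first_order_perturbation
    {𝔸 : Type*} [NormedRing 𝔸] [NormedAlgebra ℝ 𝔸] [CompleteSpace 𝔸]
    (A B : 𝔸) {m : ℕ} (O : Fin m → 𝔸) :
    (fun t : ℝ =>
        NormedSpace.exp ((t / 2) • A) * NormedSpace.exp ((t / 2) • B) *
            (List.ofFn fun k => NormedSpace.exp (t • O k)).prod *
            NormedSpace.exp ((t / 2) • B) * NormedSpace.exp ((t / 2) • A) -
          NormedSpace.exp (t • (A + B + ∑ k, O k) +
            (t ^ 2 / 2) • ∑ k, ∑ l, if k < l then O k * O l - O l * O k else 0))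
      =O[nhds (0 : ℝ)] fun t => t ^ 3 := by
  set S : 𝔸 := ∑ k, O k with hS
  set W : 𝔸 := ∑ k, ∑ l, if k < l then O k * O l - O l * O k else 0 with hW
  set C : 𝔸 := A + B + S with hC
  set a : 𝔸 := (2⁻¹ : ℝ) • A with ha
  set b : 𝔸 := (2⁻¹ : ℝ) • B with hb
  -- building blocks
  have hA : QuadApprox (fun t : ℝ => NormedSpace.exp ((t / 2) • A)) a ((2⁻¹ : ℝ) • (a * a)) :=
    (quadApprox_exp a).congr_fun fun t => by
      rw [ha, smul_smul]; norm_num [div_eq_mul_inv]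
  have hB : QuadApprox (fun t : ℝ => NormedSpace.exp ((t / 2) • B)) b ((2⁻¹ : ℝ) • (b * b)) :=
    (quadApprox_exp b).congr_fun fun t => by
      rw [hb, smul_smul]; norm_num [div_eq_mul_inv]
  have hO : QuadApprox
      (fun t : ℝ => (List.ofFn fun k => NormedSpace.exp (t • O k)).prod)
      (List.ofFn O).sum (qfList (List.ofFn O)) :=
    (quadApprox_list (List.ofFn O)).congr_fun fun t => by
      rw [List.map_ofFn]; rfl
  have hL := (((hA.mul hB).mul hO).mul hB).mul hA
  -- identify the first-order coefficient
  have hp : a + b + (List.ofFn O).sum + b + a = C := by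
    rw [List.sum_ofFn, ← hS, hC, ha, hb]; module
  rw [hp] at hL
  -- identify the second-order coefficient
  set qT : 𝔸 := (2⁻¹ : ℝ) • W + (2⁻¹ : ℝ) • (C * C) with hqT
  have hq : ((2⁻¹ : ℝ) • (a * a) + (2⁻¹ : ℝ) • (b * b) + a * b + qfList (List.ofFn O) +
        ((a + b) * (List.ofFn O).sum) + (2⁻¹ : ℝ) • (b * b) +
        (a + b + (List.ofFn O).sum) * b + (2⁻¹ : ℝ) • (a * a) +
        (a + b + (List.ofFn O).sum + b) * a) = qT := by
    rw [qfList_ofFn, List.sum_ofFn, ← hS, ← hW, hqT, hC, ha, hb]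
    simp only [mul_add, add_mul, smul_add, smul_sub, smul_mul_assoc, mul_smul_comm, smul_smul]
    match_scalars <;> ring
  have hL' := hL.congr_q hq
  -- the right-hand side
  have hR : QuadApprox
      (fun t : ℝ => NormedSpace.exp (t • C + (t ^ 2 / 2) • W)) C qT := by
    have h := quadApprox_exp_quad C ((2⁻¹ : ℝ) • W)
    refine (h.congr_fun fun t => ?_).congr_q hqT.symm
    congr 1
    rw [smul_smul]
    norm_num [div_eq_mul_inv]
  -- conclude
  have := hL'.sub hR
  refine this.congr (fun t => ?_) (fun _ => rfl)
  simp only [sub_sub_sub_cancel_right]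
end

section
/- The exact pairwise Ornstein–Uhlenbeck update of the ABOBA method preserves the Maxwellian distribution of the pair relative velocity: let β, γ, m_ij > 0, ω_R ≠ 0, ω_D = ω_R², σ² = 2γ/β, τ = γ ω_D / m_ij, and t ≥ 0. Then the pushforward, under the map (x, ξ) ↦ e^{−τ t} x + ξ, of the product of the Gaussian measure on ℝ with mean 0 and variance 1/(β m_ij) and the Gaussian measure on ℝ with mean 0 and variance (σ ω_R / m_ij)² (1 − e^{−2τ t})/(2τ), equals the Gaussian measure on ℝ with mean 0 and variance 1/(β m_ij). -/
open MeasureTheory ProbabilityTheory Real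

lemma measurable_gaussianPDF_pair (w : NNReal) :
    Measurable (fun p : ℝ × ℝ => gaussianPDF p.1 w p.2) := by
  simp only [gaussianPDF, gaussianPDFReal]
  exact ((((measurable_snd.sub measurable_fst).pow_const 2).neg.div_const _).exp.const_mul
    _).ennreal_ofReal

lemma gaussianPDFReal_conv (u w : NNReal) (hu : u ≠ 0) (hw : w ≠ 0) (y : ℝ) :
    ∫ x, gaussianPDFReal 0 u x * gaussianPDFReal x w y
      = gaussianPDFReal 0 (u + w) y := by
  have hu' : (0:ℝ) < u := lt_of_le_of_ne u.coe_nonneg (by exact_mod_cast (Ne.symm hu))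
  have hw' : (0:ℝ) < w := lt_of_le_of_ne w.coe_nonneg (by exact_mod_cast (Ne.symm hw))
  have hs' : (0:ℝ) < (u:ℝ) + w := by positivity
  set A : ℝ := ((u:ℝ) + w) / (2 * u * w) with hA
  have hApos : 0 < A := by positivity
  set b : ℝ := (u:ℝ) * y / ((u:ℝ) + w) with hb
  set K : ℝ := (√(2 * π * u))⁻¹ * (√(2 * π * w))⁻¹ * rexp (- y^2 / (2 * ((u:ℝ) + w)))
    with hK
  have hpt : ∀ x : ℝ, gaussianPDFReal 0 u x * gaussianPDFReal x w y
      = K * rexp (-A * (x - b)^2) := by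
    intro x
    have harg : -x^2/(2*(u:ℝ)) + -(y-x)^2/(2*(w:ℝ))
        = -y^2/(2*((u:ℝ)+(w:ℝ))) + -A*(x-b)^2 := by
      rw [hA, hb]; field_simp; ring
    simp only [gaussianPDFReal, hK, sub_zero]
    rw [mul_mul_mul_comm, ← Real.exp_add, harg, Real.exp_add]
    ring
  have hsqrt : (√(2*π*(u:ℝ)))⁻¹ * (√(2*π*(w:ℝ)))⁻¹ * √(π/A)
      = (√(2*π*((u:ℝ)+(w:ℝ))))⁻¹ := by
    rw [← Real.sqrt_inv, ← Real.sqrt_inv, ← Real.sqrt_mul (by positivity),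
      ← Real.sqrt_mul (by positivity), ← Real.sqrt_inv]
    congr 1
    rw [hA]
    field_simp
  calc ∫ x, gaussianPDFReal 0 u x * gaussianPDFReal x w y
      = ∫ x, K * rexp (-A * (x - b)^2) := by simp_rw [hpt]
    _ = K * ∫ x, rexp (-A * (x - b)^2) := integral_const_mul _ _
    _ = K * ∫ x, rexp (-A * x^2) := by
        rw [integral_sub_right_eq_self (fun x => rexp (-A * x^2)) b]
    _ = K * √(π / A) := by rw [integral_gaussian]
    _ = gaussianPDFReal 0 (u + w) y := by
        simp only [gaussianPDFReal, hK, sub_zero, NNReal.coe_add]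
        rw [← hsqrt]
        ring

lemma integrable_gauss_prod (u w : NNReal) (hu : u ≠ 0) (hw : w ≠ 0) (y : ℝ) :
    Integrable (fun x => gaussianPDFReal 0 u x * gaussianPDFReal x w y) := by
  have hw' : (0:ℝ) < w := lt_of_le_of_ne w.coe_nonneg (by exact_mod_cast (Ne.symm hw))
  have h : ∀ x : ℝ, gaussianPDFReal x w y = gaussianPDFReal y w x := by
    intro x; simp only [gaussianPDFReal]; ring_nf
  simp_rw [h]
  have h1 := integrable_gaussianPDFReal 0 u
  refine (h1.bdd_mul (c := (√(2 * π * w))⁻¹) ?_ ?_).congr (ae_of_all _ fun x => mul_comm _ _)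
  · exact (stronglyMeasurable_gaussianPDFReal y w).aestronglyMeasurable
  · refine ae_of_all _ fun x => ?_
    rw [norm_of_nonneg (gaussianPDFReal_nonneg _ _ _), gaussianPDFReal]
    have hle : rexp (-(x - y)^2 / (2 * w)) ≤ 1 := by
      rw [Real.exp_le_one_iff]
      exact div_nonpos_of_nonpos_of_nonneg (neg_nonpos.2 (sq_nonneg _)) (by positivity)
    calc (√(2 * π * w))⁻¹ * rexp (-(x - y)^2 / (2 * w))
        ≤ (√(2 * π * w))⁻¹ * 1 := mul_le_mul_of_nonneg_left hle (by positivity)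
      _ = (√(2 * π * w))⁻¹ := mul_one _

lemma lintegral_gaussianPDF_conv (u w : NNReal) (hu : u ≠ 0) (hw : w ≠ 0) (y : ℝ) :
    ∫⁻ x, gaussianPDF 0 u x * gaussianPDF x w y = gaussianPDF 0 (u + w) y := by
  simp only [gaussianPDF]
  calc ∫⁻ x, ENNReal.ofReal (gaussianPDFReal 0 u x) * ENNReal.ofReal (gaussianPDFReal x w y)
      = ∫⁻ x, ENNReal.ofReal (gaussianPDFReal 0 u x * gaussianPDFReal x w y) := by
        simp_rw [ENNReal.ofReal_mul (gaussianPDFReal_nonneg _ _ _)]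
    _ = ENNReal.ofReal (∫ x, gaussianPDFReal 0 u x * gaussianPDFReal x w y) :=
        (ofReal_integral_eq_lintegral_ofReal (integrable_gauss_prod u w hu hw y)
          (ae_of_all _ fun x => mul_nonneg (gaussianPDFReal_nonneg _ _ _)
            (gaussianPDFReal_nonneg _ _ _))).symm
    _ = ENNReal.ofReal (gaussianPDFReal 0 (u + w) y) := by
        rw [gaussianPDFReal_conv u w hu hw y]

lemma gaussianReal_conv (u w : NNReal) :
    Measure.map (fun p : ℝ × ℝ => p.1 + p.2)
      ((gaussianReal 0 u).prod (gaussianReal 0 w)) = gaussianReal 0 (u + w) := by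
  have hadd : Measurable (fun p : ℝ × ℝ => p.1 + p.2) :=
    measurable_fst.add measurable_snd
  by_cases hu : u = 0
  · subst hu
    rw [gaussianReal_zero_var, Measure.dirac_prod, Measure.map_map hadd measurable_prodMk_left]
    have hc : ((fun p : ℝ × ℝ => p.1 + p.2) ∘ Prod.mk (0:ℝ)) = (fun y : ℝ => (0:ℝ) + y) := rfl
    rw [hc]
    simpa using gaussianReal_map_const_add (μ := 0) (v := w) 0
  by_cases hw : w = 0
  · subst hw
    rw [gaussianReal_zero_var, Measure.prod_dirac,
      Measure.map_map hadd (measurable_prodMk_right)]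
    have hc : ((fun p : ℝ × ℝ => p.1 + p.2) ∘ (fun x : ℝ => (x, (0:ℝ)))) =
        (fun x : ℝ => x + (0:ℝ)) := rfl
    rw [hc]
    simpa using gaussianReal_map_add_const (μ := 0) (v := u) 0
  -- main case
  have hs : (u + w) ≠ 0 := by
    simp only [ne_eq, add_eq_zero, not_and]
    intro h; exact absurd h hu
  ext s hs'
  rw [Measure.map_apply hadd hs', gaussianReal_of_var_ne_zero 0 hu,
    gaussianReal_of_var_ne_zero 0 hs]
  rw [Measure.prod_apply (hadd hs'), withDensity_apply _ hs']
  have hslice : ∀ x : ℝ, (Prod.mk x ⁻¹' ((fun p : ℝ × ℝ => p.1 + p.2) ⁻¹' s))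
      = (fun y => x + y) ⁻¹' s := fun x => rfl
  simp_rw [hslice]
  have hmap : ∀ x : ℝ, gaussianReal 0 w ((fun y => x + y) ⁻¹' s)
      = ∫⁻ y in s, gaussianPDF x w y := by
    intro x
    have h1 := gaussianReal_map_const_add (μ := 0) (v := w) x
    have h2 : (gaussianReal 0 w).map (fun y => x + y) s = gaussianReal (0 + x) w s := by
      rw [h1]
    rw [Measure.map_apply (measurable_const_add x) hs'] at h2
    rw [h2, zero_add, gaussianReal_apply _ hw]
  calc ∫⁻ x, gaussianReal 0 w ((fun y => x + y) ⁻¹' s) ∂(volume.withDensity (gaussianPDF 0 u))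
      = ∫⁻ x, gaussianPDF 0 u x * ∫⁻ y in s, gaussianPDF x w y := by
        simp_rw [hmap]
        rw [lintegral_withDensity_eq_lintegral_mul _ (measurable_gaussianPDF 0 u)]
        · rfl
        · exact Measurable.lintegral_prod_right (f := fun x y => gaussianPDF x w y)
            (ν := volume.restrict s) (measurable_gaussianPDF_pair w)
    _ = ∫⁻ x, ∫⁻ y in s, gaussianPDF 0 u x * gaussianPDF x w y := by
        congr 1; ext x
        rw [lintegral_const_mul _ (measurable_gaussianPDF x w)]
    _ = ∫⁻ y in s, ∫⁻ x, gaussianPDF 0 u x * gaussianPDF x w y := by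
        rw [lintegral_lintegral_swap]
        exact (((measurable_gaussianPDF 0 u).comp measurable_fst).mul
          (measurable_gaussianPDF_pair w)).aemeasurable
    _ = ∫⁻ y in s, gaussianPDF 0 (u + w) y := by
        congr 1; ext y
        exact lintegral_gaussianPDF_conv u w hu hw y

/-- the exact pairwise Ornstein–Uhlenbeck update of the ABOBA method preserves
the Maxwellian distribution of the pair relative velocity: the pushforward, under
`(x, ξ) ↦ e^{−τt} x + ξ`, of the product of the Gaussian of variance `1/(β m_ij)` with the
Gaussian of variance `(σ ω_R/m_ij)² (1 − e^{−2τt})/(2τ)`, is the Gaussian of variance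
`1/(β m_ij)`. -/
theorem aboba_pairwise_ou_preserves_maxwellian
    (β γ mij ωR ωD σ τ t : ℝ)
    (hβ : 0 < β) (hγ : 0 < γ) (hmij : 0 < mij) (hωR : ωR ≠ 0)
    (hωD : ωD = ωR ^ 2) (hσ : σ ^ 2 = 2 * γ / β)
    (hτ : τ = γ * ωD / mij) (ht : 0 ≤ t)
    (v₁ v₂ : NNReal)
    (hv₁ : (v₁ : ℝ) = 1 / (β * mij))
    (hv₂ : (v₂ : ℝ) = (σ * ωR / mij) ^ 2 * (1 - Real.exp (-(2 * τ * t))) / (2 * τ)) :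
    Measure.map (fun xξ : ℝ × ℝ => Real.exp (-(τ * t)) * xξ.1 + xξ.2)
        ((gaussianReal 0 v₁).prod (gaussianReal 0 v₂)) = gaussianReal 0 v₁ := by
  set a : ℝ := Real.exp (-(τ * t)) with ha
  have hcomp : (fun xξ : ℝ × ℝ => a * xξ.1 + xξ.2)
      = (fun p : ℝ × ℝ => p.1 + p.2) ∘ (Prod.map (fun x : ℝ => a * x) id) := rfl
  rw [hcomp, ← Measure.map_map (show Measurable (fun p : ℝ × ℝ => p.1 + p.2) from
      measurable_fst.add measurable_snd)
    ((measurable_const_mul a).prodMap measurable_id),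
    ← Measure.map_prod_map _ _ (measurable_const_mul a) measurable_id,
    Measure.map_id, gaussianReal_map_const_mul a, mul_zero, gaussianReal_conv]
  congr 1
  -- arithmetic : a² v₁ + v₂ = v₁
  have ha2 : Real.exp (-(2 * τ * t)) = a ^ 2 := by
    rw [ha, sq, ← Real.exp_add]; congr 1; ring
  have hv₂' : (v₂ : ℝ) = (1 - a ^ 2) / (β * mij) := by
    rw [hv₂, ha2, div_pow, mul_pow, hσ, hτ, hωD]
    field_simp
  rw [← NNReal.coe_inj]
  push_cast
  rw [hv₂', hv₁]
  field_simp
  ring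
end
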